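/- Let (K, w, A) be a weighted graph. Then π₁(K, w, A) is isomorphic to the free product (Monoid.CoprodI) of the family of cyclic groups indexed by the edges ab of K, where the factor at ab is ℤ if ab does not lie in A, and ℤ/w(ab) if ab lies in A. -/

import Mathlib

open scoped Classical

variable {V : Type*}

/-- Generators of the weighted fundamental group: edges `ab` of `K` with `a < b`. -/
def WGen [LinearOrder V] (K : SimpleGraph V) : Type _ :=
  {p : V × V // p.1 < p.2 ∧ K.Adj p.1 p.2}

/-- The relators of the weighted fundamental group: (1) `g_{ab}^{w(ab)}` for edges of the
spanning tree `A`; (2) `g_{ab}^{w(ab)} · (g_{av}^{w(av)} · g_{vb}^{w(vb)})⁻¹` for 2-simplices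
`{a, v, b} ∈ T` with `a < v < b`. -/
def WRelators [LinearOrder V] (K : SimpleGraph V) (T : Set (Finset V))
    (w : Sym2 V → ℤ) (A : SimpleGraph V) : Set (FreeGroup (WGen K)) :=
  {r | ∃ e : WGen K, A.Adj e.1.1 e.1.2 ∧ r = FreeGroup.of e ^ w s(e.1.1, e.1.2)} ∪
  {r | ∃ (a v b : V) (hav : a < v) (hvb : v < b)
       (h1 : K.Adj a v) (h2 : K.Adj v b) (h3 : K.Adj a b),
       ({a, v, b} : Finset V) ∈ T ∧
       r = FreeGroup.of (⟨(a, b), hav.trans hvb, h3⟩ : WGen K) ^ w s(a, b) *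
         (FreeGroup.of (⟨(a, v), hav, h1⟩ : WGen K) ^ w s(a, v) *
          FreeGroup.of (⟨(v, b), hvb, h2⟩ : WGen K) ^ w s(v, b))⁻¹}

/-- The weighted fundamental group `π₁(K, w, A)` of the WSC `(K, T, w, A)`,
as a presented group. -/
def wpi1 [LinearOrder V] (K : SimpleGraph V) (T : Set (Finset V))
    (w : Sym2 V → ℤ) (A : SimpleGraph V) : Type _ :=
  PresentedGroup (WRelators K T w A)

noncomputable instance [LinearOrder V] (K : SimpleGraph V) (T : Set (Finset V))
    (w : Sym2 V → ℤ) (A : SimpleGraph V) : Group (wpi1 K T w A) := by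
  unfold wpi1; infer_instance

/-- `(K, T, w, A)` is a weighted simplicial complex: `K` is a connected simple graph,
`T` is a set of 2-simplices (unordered triples of distinct pairwise adjacent vertices),
and `A` is a spanning tree of `K`. -/
structure IsWSC (K : SimpleGraph V) (T : Set (Finset V))
    (w : Sym2 V → ℤ) (A : SimpleGraph V) : Prop where
  conn : K.Connected
  tri : ∀ t ∈ T, ∃ a v b : V, a ≠ v ∧ v ≠ b ∧ a ≠ b ∧ t = {a, v, b} ∧
        K.Adj a v ∧ K.Adj v b ∧ K.Adj a b
  tree : A.IsTree
  le : A ≤ K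

/-- Exactly two of the three edges of every 2-simplex of `T` lie in the tree `A`. -/
def ExactlyTwo [LinearOrder V] (T : Set (Finset V)) (A : SimpleGraph V) : Prop :=
  ∀ a v b : V, a < v → v < b → ({a, v, b} : Finset V) ∈ T →
    ((if A.Adj a b then 1 else 0) + (if A.Adj a v then 1 else 0) +
      (if A.Adj v b then 1 else 0) : ℕ) = 2

/-- The modulus of the cyclic factor associated to an edge of a weighted graph:
`|w(ab)|` if `ab` lies in the tree `A`, and `0` otherwise (recall `ZMod 0 = ℤ`). -/
noncomputable def graphFacMod [LinearOrder V] (K : SimpleGraph V) (w : Sym2 V → ℤ)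
    (A : SimpleGraph V) (e : WGen K) : ℕ :=
  if A.Adj e.1.1 e.1.2 then (w s(e.1.1, e.1.2)).natAbs else 0

/-- Proposition 3.2. The weighted fundamental group of a weighted graph
`(K, w, A)` (a WSC with no 2-simplices) is the free product, over the edges `ab` of `K`, of
`ℤ` if `ab ∉ A` and of `ℤ/w(ab)` if `ab ∈ A`. -/
-- auxiliary: ext for monoid homs out of Multiplicative (ZMod n)
theorem mult_zmod_hom_ext {n : ℕ} {G : Type*} [Group G]
    {f g : Multiplicative (ZMod n) →* G}
    (h : f (Multiplicative.ofAdd 1) = g (Multiplicative.ofAdd 1)) : f = g := by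
  apply MonoidHom.ext; intro x
  obtain ⟨k, hk⟩ := ZMod.intCast_surjective (Multiplicative.toAdd x)
  have hx : x = (Multiplicative.ofAdd (1 : ZMod n)) ^ k := by
    rw [← ofAdd_zsmul, zsmul_one, hk, ofAdd_toAdd]
  rw [hx, map_zpow, map_zpow, h]

theorem weighted_pi1_graph [LinearOrder V] (K : SimpleGraph V) (w : Sym2 V → ℤ)
    (A : SimpleGraph V) (hwsc : IsWSC K (∅ : Set (Finset V)) w A) :
    Nonempty (wpi1 K (∅ : Set (Finset V)) w A ≃*
      Monoid.CoprodI (fun e : WGen K => Multiplicative (ZMod (graphFacMod K w A e)))) := by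
  classical
  set m := graphFacMod K w A with hm
  set G := Monoid.CoprodI (fun e : WGen K => Multiplicative (ZMod (m e))) with hG
  -- forward map
  set F : WGen K → G := fun e => Monoid.CoprodI.of (M := fun e : WGen K => Multiplicative (ZMod (m e))) (i := e) (Multiplicative.ofAdd (1 : ZMod (m e))) with hF
  have hrel : ∀ r ∈ WRelators K (∅ : Set (Finset V)) w A, FreeGroup.lift F r = 1 := by
    rintro r (⟨e, he, rfl⟩ | ⟨a, v, b, _, _, _, _, _, habv, _⟩)
    · have hme : m e = (w s(e.1.1, e.1.2)).natAbs := by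
        simp [hm, graphFacMod, he]
      rw [map_zpow, FreeGroup.lift_apply_of, hF]
      have : (Multiplicative.ofAdd (1 : ZMod (m e))) ^ (w s(e.1.1, e.1.2)) =
          Multiplicative.ofAdd ((w s(e.1.1, e.1.2) : ZMod (m e))) := by
        rw [← ofAdd_zsmul, zsmul_one]
      rw [← map_zpow, this]
      have hz : ((w s(e.1.1, e.1.2) : ℤ) : ZMod (m e)) = 0 := by
        rw [hme, ZMod.intCast_zmod_eq_zero_iff_dvd]
        exact Int.natAbs_dvd.mpr dvd_rfl
      rw [hz, ofAdd_zero, map_one]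
    · exact absurd habv (Set.notMem_empty _)
  let φ : wpi1 K (∅ : Set (Finset V)) w A →* G := PresentedGroup.toGroup hrel
  -- backward map
  have hpow : ∀ e : WGen K,
      (PresentedGroup.of (rels := WRelators K (∅ : Set (Finset V)) w A) e) ^ (m e : ℤ) = 1 := by
    intro e
    by_cases he : A.Adj e.1.1 e.1.2
    · have hme : m e = (w s(e.1.1, e.1.2)).natAbs := by simp [hm, graphFacMod, he]
      have h1 : (PresentedGroup.of (rels := WRelators K (∅ : Set (Finset V)) w A) e)
          ^ (w s(e.1.1, e.1.2)) = 1 := by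
        have : (FreeGroup.of e ^ w s(e.1.1, e.1.2)) ∈
            Subgroup.normalClosure (WRelators K (∅ : Set (Finset V)) w A) :=
          Subgroup.subset_normalClosure (Or.inl ⟨e, he, rfl⟩)
        rw [show (PresentedGroup.of (rels := WRelators K (∅ : Set (Finset V)) w A) e)
            ^ (w s(e.1.1, e.1.2)) = QuotientGroup.mk (FreeGroup.of e ^ w s(e.1.1, e.1.2)) from rfl]
        exact (QuotientGroup.eq_one_iff _).mpr this
      rcases Int.natAbs_eq (w s(e.1.1, e.1.2)) with h | h
      · rw [hme, ← h]; exact h1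
      · rw [hme, show ((w s(e.1.1, e.1.2)).natAbs : ℤ) = -(w s(e.1.1, e.1.2)) by omega,
          zpow_neg, h1, inv_one]
    · have hme : m e = 0 := by simp [hm, graphFacMod, he]
      rw [hme]; simp
  let ρ : ∀ e : WGen K, Multiplicative (ZMod (m e)) →* wpi1 K (∅ : Set (Finset V)) w A :=
    fun e => AddMonoidHom.toMultiplicativeLeft
      (ZMod.lift (m e) ⟨zmultiplesHom _ (Additive.ofMul (PresentedGroup.of e)),
        by exact hpow e⟩)
  let ψ : G →* wpi1 K (∅ : Set (Finset V)) w A := Monoid.CoprodI.lift ρ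
  have hρ : ∀ e : WGen K, ρ e (Multiplicative.ofAdd (1 : ZMod (m e))) = PresentedGroup.of e := by
    intro e
    have h1 : ((1 : ZMod (m e))) = ((1 : ℤ) : ZMod (m e)) := by norm_cast
    simp only [ρ, AddMonoidHom.coe_toMultiplicativeLeft, Function.comp_apply]
    rw [show (Multiplicative.toAdd (Multiplicative.ofAdd (1 : ZMod (m e)))) = (1 : ZMod (m e)) from rfl, h1, ZMod.lift_coe]
    simp
    rfl
  have h1 : ψ.comp φ = MonoidHom.id _ := by
    apply PresentedGroup.ext
    intro e
    show ψ (φ (PresentedGroup.of e)) = PresentedGroup.of e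
    exact (congrArg ψ (PresentedGroup.toGroup.of hrel)).trans
      ((Monoid.CoprodI.lift_of ρ (Multiplicative.ofAdd (1 : ZMod (m e)))).trans (hρ e))
  have h2 : φ.comp ψ = MonoidHom.id _ := by
    apply Monoid.CoprodI.ext_hom
    intro e
    apply mult_zmod_hom_ext
    simp only [MonoidHom.comp_apply, MonoidHom.id_apply]
    rw [show ψ (Monoid.CoprodI.of (Multiplicative.ofAdd (1 : ZMod (m e)))) =
      ρ e (Multiplicative.ofAdd (1 : ZMod (m e))) from Monoid.CoprodI.lift_of .., hρ e]
    exact PresentedGroup.toGroup.of hrel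
  exact ⟨MonoidHom.toMulEquiv φ ψ h1 h2⟩
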